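/- Let P be a finite poset on {p_1,...,p_n}. The poset ideals (down-sets) J of P are in bijection with the 'antichain-cut' minimal vertex covers of the bipartite graph G(P) (edges {x_i,y_j} iff p_i ≤ p_j): specifically, for every down-set J of P, the set {x_i : p_i ∈ J} ∪ {y_j : p_j ∉ J} is a minimal vertex cover of G(P), and every minimal vertex cover of G(P) arises this way from a unique down-set. -/

import Mathlib

def IsCover (n : ℕ) (E : Fin n → Fin n → Prop) (C : Set (Fin n ⊕ Fin n)) : Prop :=
  ∀ i j, E i j → Sum.inl i ∈ C ∨ Sum.inr j ∈ C

def IsMinCover (n : ℕ) (E : Fin n → Fin n → Prop) (C : Set (Fin n ⊕ Fin n)) : Prop :=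
  IsCover n E C ∧ ∀ D ⊂ C, ¬ IsCover n E D

/-- for a finite poset `P` on `{p_1,…,p_n}` and the bipartite graph `G(P)`
(`{x_i,y_j} ∈ E ⟺ p_i ≤ p_j`), every down-set `J` gives a minimal vertex cover
`{x_i : p_i ∈ J} ∪ {y_j : p_j ∉ J}`, and every minimal vertex cover arises this way from a
unique down-set. -/
theorem stmt19 (n : ℕ) (le : Fin n → Fin n → Prop) [IsPartialOrder (Fin n) le] :
    (∀ J : Set (Fin n), (∀ p q : Fin n, le q p → p ∈ J → q ∈ J) →
      IsMinCover n le (Sum.inl '' J ∪ Sum.inr '' Jᶜ)) ∧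
    (∀ C, IsMinCover n le C →
      ∃! J : Set (Fin n), (∀ p q : Fin n, le q p → p ∈ J → q ∈ J) ∧
        C = Sum.inl '' J ∪ Sum.inr '' Jᶜ) := by
  have hrefl : ∀ i, le i i := fun i => Std.Refl.refl i
  have htrans : ∀ {a b c}, le a b → le b c → le a c :=
    fun h1 h2 => IsTrans.trans _ _ _ h1 h2
  -- membership simplification for the union set
  have memL : ∀ (J : Set (Fin n)) (i : Fin n),
      Sum.inl i ∈ (Sum.inl '' J ∪ Sum.inr '' Jᶜ : Set (Fin n ⊕ Fin n)) ↔ i ∈ J := by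
    intro J i
    constructor
    · rintro (⟨a, ha, h⟩ | ⟨a, _, h⟩)
      · cases h; exact ha
      · exact absurd h (by simp)
    · intro h; exact Or.inl ⟨i, h, rfl⟩
  have memR : ∀ (J : Set (Fin n)) (j : Fin n),
      Sum.inr j ∈ (Sum.inl '' J ∪ Sum.inr '' Jᶜ : Set (Fin n ⊕ Fin n)) ↔ j ∉ J := by
    intro J j
    constructor
    · rintro (⟨a, _, h⟩ | ⟨a, ha, h⟩)
      · exact absurd h (by simp)
      · cases h; exact ha
    · intro h; exact Or.inr ⟨j, h, rfl⟩
  constructor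
  · -- every down-set gives a minimal cover
    intro J hJ
    constructor
    · intro i j hij
      by_cases hi : i ∈ J
      · exact Or.inl ((memL J i).mpr hi)
      · exact Or.inr ((memR J j).mpr fun hj => hi (hJ j i hij hj))
    · intro D hD hcov
      obtain ⟨v, hvC, hvD⟩ := Set.exists_of_ssubset hD
      rcases v with i | j
      · have hi : i ∈ J := (memL J i).mp hvC
        rcases hcov i i (hrefl i) with h | h
        · exact hvD h
        · exact (memR J i).mp (hD.1 h) hi
      · have hj : j ∉ J := (memR J j).mp hvC
        rcases hcov j j (hrefl j) with h | h
        · exact hj ((memL J j).mp (hD.1 h))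
        · exact hvD h
  · -- every minimal cover arises uniquely
    intro C hC
    -- key facts from minimality
    have key1 : ∀ p, Sum.inl p ∈ C → ∃ j, le p j ∧ Sum.inr j ∉ C := by
      intro p hp
      by_contra h
      push_neg at h
      refine hC.2 (C \ {Sum.inl p}) (Set.sdiff_singleton_ssubset.mpr hp) ?_
      intro i j hij
      rcases hC.1 i j hij with hi | hj
      · by_cases hip : i = p
        · subst hip
          exact Or.inr ⟨h j hij, by simp⟩
        · exact Or.inl ⟨hi, by simp [hip]⟩
      · exact Or.inr ⟨hj, by simp⟩
    have key2 : ∀ j, Sum.inr j ∈ C → ∃ i, le i j ∧ Sum.inl i ∉ C := by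
      intro j hj
      by_contra h
      push_neg at h
      refine hC.2 (C \ {Sum.inr j}) (Set.sdiff_singleton_ssubset.mpr hj) ?_
      intro i j' hij
      rcases hC.1 i j' hij with hi | hj'
      · exact Or.inl ⟨hi, by simp⟩
      · by_cases hjj : j' = j
        · subst hjj
          exact Or.inl ⟨h i hij, by simp⟩
        · exact Or.inr ⟨hj', by simp [hjj]⟩
    set J : Set (Fin n) := {i | Sum.inl i ∈ C} with hJdef
    have hdown : ∀ p q : Fin n, le q p → p ∈ J → q ∈ J := by
      intro p q hqp hp
      obtain ⟨j, hpj, hj⟩ := key1 p hp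
      rcases hC.1 q j (htrans hqp hpj) with h | h
      · exact h
      · exact absurd h hj
    have hCeq : C = Sum.inl '' J ∪ Sum.inr '' Jᶜ := by
      ext v
      rcases v with i | j
      · rw [memL]; exact Iff.rfl
      · rw [memR]
        constructor
        · intro hj hjJ
          obtain ⟨i, hij, hi⟩ := key2 j hj
          exact hi (hdown j i hij hjJ)
        · intro hj
          rcases hC.1 j j (hrefl j) with h | h
          · exact absurd h hj
          · exact h
    refine ⟨J, ⟨hdown, hCeq⟩, ?_⟩
    intro J' ⟨_, hCeq'⟩
    ext i
    have : i ∈ J' ↔ Sum.inl i ∈ C := by rw [hCeq', memL]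
    rw [this]; exact Iff.rfl
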